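/- Let S ≥ 1 and T ≥ S + 1 be integers, q ≠ 0, Δ(ρ) = ρ^{2S} − 2mρ^S + q². The determinant of the 2×2 matrix g with entries g_{ττ} = −Δρ^{2T−2S}, g_{τρ} = g_{ρτ} = −TΔτρ^{2T−2S−1}, g_{ρρ} = S²ρ^{4S−2}/Δ − T²Δτ²ρ^{2T−2S−2} equals −S²ρ^{2T+2S−2}. In particular, det g = 0 exactly when ρ = 0, so the extended metric is degenerate precisely on the hypersurface ρ = 0. -/
import Mathlib


/-- For integers `S ≥ 1`, `T ≥ S + 1`, `q ≠ 0`, `Δ(ρ) = ρ^{2S} − 2mρ^S + q² ≠ 0`,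
the determinant of the extended metric matrix equals `−S²ρ^{2T+2S−2}`; in
particular it vanishes exactly when `ρ = 0` (the metric is degenerate precisely
on the hypersurface `ρ = 0`). -/
theorem stmt_8 (m q : ℝ) (hq : q ≠ 0) (S T : ℕ) (hS : 1 ≤ S) (hT : S + 1 ≤ T)
    (τ ρ Δ : ℝ) (hΔdef : Δ = ρ ^ (2 * S) - 2 * m * ρ ^ S + q ^ 2) (hΔ : Δ ≠ 0) :
    Matrix.det
      !![-(Δ * ρ ^ (2 * T - 2 * S)), -((T : ℝ) * Δ * τ * ρ ^ (2 * T - 2 * S - 1));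
         -((T : ℝ) * Δ * τ * ρ ^ (2 * T - 2 * S - 1)),
         (S : ℝ) ^ 2 * ρ ^ (4 * S - 2) / Δ -
           (T : ℝ) ^ 2 * Δ * τ ^ 2 * ρ ^ (2 * T - 2 * S - 2)] =
      -(S : ℝ) ^ 2 * ρ ^ (2 * T + 2 * S - 2) ∧
    (Matrix.det
      !![-(Δ * ρ ^ (2 * T - 2 * S)), -((T : ℝ) * Δ * τ * ρ ^ (2 * T - 2 * S - 1));
         -((T : ℝ) * Δ * τ * ρ ^ (2 * T - 2 * S - 1)),
         (S : ℝ) ^ 2 * ρ ^ (4 * S - 2) / Δ -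
           (T : ℝ) ^ 2 * Δ * τ ^ 2 * ρ ^ (2 * T - 2 * S - 2)] = 0 ↔ ρ = 0) := by
  obtain ⟨i, rfl⟩ : ∃ i, S = 1 + i := ⟨S - 1, by omega⟩
  obtain ⟨t, rfl⟩ : ∃ t, T = (1 + i) + 1 + t := ⟨T - (1 + i) - 1, by omega⟩
  have e1 : 2 * ((1 + i) + 1 + t) - 2 * (1 + i) = 2 + 2 * t := by omega
  have e2 : 2 + 2 * t - 1 = 1 + 2 * t := by omega
  have e3 : 2 + 2 * t - 2 = 2 * t := by omega
  have e4 : 4 * (1 + i) - 2 = 2 + 4 * i := by omega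
  have e5 : 2 * ((1 + i) + 1 + t) + 2 * (1 + i) - 2 = 4 + 4 * i + 2 * t := by omega
  rw [e1, e2, e3, e4, e5, Matrix.det_fin_two_of]
  have hdet : -(Δ * ρ ^ (2 + 2 * t)) *
        ((((1:ℕ) + i : ℕ) : ℝ) ^ 2 * ρ ^ (2 + 4 * i) / Δ -
          ((((1 + i) + 1 + t : ℕ) : ℝ)) ^ 2 * Δ * τ ^ 2 * ρ ^ (2 * t)) -
      -(((((1 + i) + 1 + t : ℕ) : ℝ)) * Δ * τ * ρ ^ (1 + 2 * t)) *
        -(((((1 + i) + 1 + t : ℕ) : ℝ)) * Δ * τ * ρ ^ (1 + 2 * t)) =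
      -(((1:ℕ) + i : ℕ) : ℝ) ^ 2 * ρ ^ (4 + 4 * i + 2 * t) := by
    field_simp
    ring
  refine ⟨hdet, ?_⟩
  rw [hdet]
  constructor
  · intro h
    have hS0 : ((((1:ℕ) + i : ℕ) : ℝ)) ≠ 0 := by positivity
    have := mul_eq_zero.mp h
    rcases this with h1 | h2
    · exact absurd h1 (by simp [neg_eq_zero]; positivity)
    · exact pow_eq_zero_iff (by omega) |>.mp h2
  · rintro rfl
    simp
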